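/- Let Ω be a nonempty finite set, ι a nonempty finite index set, and for each i ∈ ι let 𝒫_i be a nonempty set of pmfs on Ω, with parametric complexity C(𝒫_i) and NML pmf q_{𝒫_i}. Let π : ι → ℝ be a probability vector (π_i ≥ 0, Σ_i π_i = 1) over the model family, for each i ∈ ι let p*_i ∈ 𝒫_i be a true pmf of model i, let n > 0 be a real, and for each i let î_i : Ω → ι be a selection map satisfying q_{𝒫_{î_i(x)}}(x) ≥ q_{𝒫_j}(x) for all x ∈ Ω, j ∈ ι. Assume BC(p*_i, q_{𝒫_j}) > 0 for all i, j ∈ ι. Then the model-averaged expected Bhattacharyya distance between the output of the MDL learning algorithm and the true distribution satisfies Σ_{i∈ι} π_i · Σ_{x∈Ω} p*_i(x) · d_B^{(n)}( p*_i, q_{𝒫_{î_i(x)}} ) ≤ ( Σ_{i∈ι} π_i·(1/2)·log C(𝒫_i) + log |ι| + 1 ) / n. -/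

import Mathlib

open Classical

/-- A probability mass function on a finite set. -/
def IsPmf {Ω : Type*} [Fintype Ω] (p : Ω → ℝ) : Prop :=
  (∀ x, 0 ≤ p x) ∧ ∑ x, p x = 1

/-- `M(x) = sup_{p ∈ 𝒫} p(x)`, the maximum likelihood value. -/
noncomputable def nmlNum {Ω : Type*} [Fintype Ω] (P : Set (Ω → ℝ)) (x : Ω) : ℝ :=
  ⨆ p : P, (p : Ω → ℝ) x

/-- The parametric complexity `C(𝒫) = Σ_x sup_{p ∈ 𝒫} p(x)`. -/
noncomputable def paramComplexity {Ω : Type*} [Fintype Ω] (P : Set (Ω → ℝ)) : ℝ :=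
  ∑ x, nmlNum P x

/-- The normalized maximum likelihood (NML) pmf of `𝒫`. -/
noncomputable def nmlPmf {Ω : Type*} [Fintype Ω] (P : Set (Ω → ℝ)) (x : Ω) : ℝ :=
  nmlNum P x / paramComplexity P

/-- The Bhattacharyya coefficient `BC(p,q) = Σ_x √(p(x)·q(x))`. -/
noncomputable def BC {Ω : Type*} [Fintype Ω] (p q : Ω → ℝ) : ℝ :=
  ∑ x, Real.sqrt (p x * q x)

section Aux
variable {Ω : Type*} [Fintype Ω]

lemma pmf_le_one' {p : Ω → ℝ} (h : IsPmf p) (x : Ω) : p x ≤ 1 := by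
  have := Finset.single_le_sum (f := p) (fun y _ => h.1 y) (Finset.mem_univ x)
  simpa [h.2] using this

lemma le_nmlNum' {P : Set (Ω → ℝ)} (hpmf : ∀ p ∈ P, IsPmf p) {p : Ω → ℝ} (hp : p ∈ P) (x : Ω) :
    p x ≤ nmlNum P x := by
  have hbdd : BddAbove (Set.range fun q : P => (q : Ω → ℝ) x) := by
    refine ⟨1, ?_⟩
    rintro _ ⟨q, rfl⟩
    exact pmf_le_one' (hpmf _ q.2) x
  exact le_ciSup hbdd ⟨p, hp⟩

lemma nmlNum_nonneg' {P : Set (Ω → ℝ)} (hne : P.Nonempty) (hpmf : ∀ p ∈ P, IsPmf p) (x : Ω) :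
    0 ≤ nmlNum P x := by
  obtain ⟨p, hp⟩ := hne
  exact le_trans ((hpmf p hp).1 x) (le_nmlNum' hpmf hp x)

lemma one_le_paramComplexity' {P : Set (Ω → ℝ)} (hne : P.Nonempty) (hpmf : ∀ p ∈ P, IsPmf p) :
    1 ≤ paramComplexity P := by
  obtain ⟨p, hp⟩ := hne
  calc (1:ℝ) = ∑ x, p x := (hpmf p hp).2.symm
  _ ≤ ∑ x, nmlNum P x := Finset.sum_le_sum fun x _ => le_nmlNum' hpmf hp x

lemma neg_mul_log_le' {t m : ℝ} (ht : 0 ≤ t) (hm : 1 ≤ m) :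
    t * (-Real.log t) ≤ 1 / m + t * (Real.log m - 1) := by
  have hm0 : (0:ℝ) < m := lt_of_lt_of_le one_pos hm
  rcases eq_or_lt_of_le ht with h | h
  · rw [← h]; simp; positivity
  · have h1 : Real.log (1 / (t * m)) ≤ 1 / (t * m) - 1 :=
      Real.log_le_sub_one_of_pos (by positivity)
    have h2 : Real.log (1 / (t * m)) = -Real.log t - Real.log m := by
      rw [one_div, Real.log_inv, Real.log_mul (ne_of_gt h) (ne_of_gt hm0)]; ring
    have h3 : -Real.log t ≤ 1 / (t * m) - 1 + Real.log m := by
      rw [h2] at h1; linarith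
    calc t * (-Real.log t) ≤ t * (1 / (t * m) - 1 + Real.log m) :=
          mul_le_mul_of_nonneg_left h3 ht
    _ = 1 / m + t * (Real.log m - 1) := by field_simp; ring

end Aux
/-- Model-fusion (model-averaged) expected Bhattacharyya distance bound for MDL learning:
if the true model index is drawn from the family `{𝒫_i}` according to a probability vector
`π`, the true pmf of model `i` is `p*_i ∈ 𝒫_i`, and for each `i` the selection map `î_i(x)`
maximizes `q_{𝒫_j}(x)` over `j`, then
`Σ_i π_i Σ_x p*_i(x)·d_B^{(n)}(p*_i, q_{𝒫_{î_i(x)}})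
  ≤ (Σ_i π_i·(1/2)·log C(𝒫_i) + log |ι| + 1)/n`,
where `d_B^{(n)}(p,q) = −(1/n)·log BC(p,q)`. -/
theorem mdl_model_fusion_expected_bhattacharyya_bound {Ω ι : Type*} [Fintype Ω] [Nonempty Ω]
    [Fintype ι] [Nonempty ι]
    (P : ι → Set (Ω → ℝ)) (hne : ∀ i, (P i).Nonempty)
    (hpmf : ∀ i, ∀ p ∈ P i, IsPmf p)
    (w : ι → ℝ) (hw : ∀ i, 0 ≤ w i) (hwsum : ∑ i, w i = 1)
    (pstar : ι → Ω → ℝ) (hpstar : ∀ i, pstar i ∈ P i)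
    (n : ℝ) (hn : 0 < n)
    (ih : ι → Ω → ι) (hih : ∀ i, ∀ x, ∀ j, nmlPmf (P j) x ≤ nmlPmf (P (ih i x)) x)
    (hBC : ∀ i j, 0 < BC (pstar i) (nmlPmf (P j))) :
    ∑ i, w i * ∑ x, pstar i x * (-(1 / n) * Real.log (BC (pstar i) (nmlPmf (P (ih i x))))) ≤
      (∑ i, w i * ((1 / 2) * Real.log (paramComplexity (P i))) +
        Real.log (Fintype.card ι) + 1) / n := by
  classical
  have hm1 : (1:ℝ) ≤ (Fintype.card ι : ℝ) := by exact_mod_cast Fintype.card_pos (α := ι)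
  have hm0 : (0:ℝ) < (Fintype.card ι : ℝ) := lt_of_lt_of_le one_pos hm1
  have hq0 : ∀ (j : ι) (x : Ω), 0 ≤ nmlPmf (P j) x := fun j x =>
    div_nonneg (nmlNum_nonneg' (hne j) (hpmf j) x)
      (le_trans zero_le_one (one_le_paramComplexity' (hne j) (hpmf j)))
  have key : ∀ i, ∑ x, pstar i x * (-Real.log (BC (pstar i) (nmlPmf (P (ih i x))))) ≤
      (1/2) * Real.log (paramComplexity (P i)) + Real.log (Fintype.card ι) := by
    intro i
    have hpi : IsPmf (pstar i) := hpmf i _ (hpstar i)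
    set C := paramComplexity (P i) with hCdef
    have hC1 : 1 ≤ C := one_le_paramComplexity' (hne i) (hpmf i)
    have hC0 : 0 < C := lt_of_lt_of_le one_pos hC1
    have hsC : 0 < Real.sqrt C := Real.sqrt_pos.2 hC0
    set A : ι → Finset Ω := fun j => Finset.univ.filter (fun x => ih i x = j) with hA
    set Pj : ι → ℝ := fun j => ∑ x ∈ A j, pstar i x with hPj
    set Bj : ι → ℝ := fun j => BC (pstar i) (nmlPmf (P j)) with hBj
    have hPjnn : ∀ j, 0 ≤ Pj j := fun j => Finset.sum_nonneg fun x _ => hpi.1 x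
    have hPsum : ∑ j, Pj j = 1 := by
      rw [hPj]
      simp only [hA]
      rw [Finset.sum_fiberwise Finset.univ (fun x => ih i x) (fun x => pstar i x)]
      exact hpi.2
    have hBlb : ∀ j, Pj j / Real.sqrt C ≤ Bj j := by
      intro j
      have hpt : ∀ x ∈ A j, pstar i x / Real.sqrt C ≤ Real.sqrt (pstar i x * nmlPmf (P j) x) := by
        intro x hx
        have hxj : ih i x = j := by
          simpa [hA, Finset.mem_filter] using hx
        have h1 : pstar i x / C ≤ nmlPmf (P j) x := by
          have h2 : pstar i x / C ≤ nmlPmf (P i) x := by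
            unfold nmlPmf
            rw [← hCdef]
            exact div_le_div_of_nonneg_right (le_nmlNum' (hpmf i) (hpstar i) x) hC0.le
          calc pstar i x / C ≤ nmlPmf (P i) x := h2
          _ ≤ nmlPmf (P (ih i x)) x := hih i x i
          _ = nmlPmf (P j) x := by rw [hxj]
        have h3 : (pstar i x)^2 / C ≤ pstar i x * nmlPmf (P j) x := by
          have := mul_le_mul_of_nonneg_left h1 (hpi.1 x)
          calc (pstar i x)^2 / C = pstar i x * (pstar i x / C) := by ring
          _ ≤ _ := this
        calc pstar i x / Real.sqrt C = Real.sqrt ((pstar i x)^2 / C) := by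
              rw [Real.sqrt_div (sq_nonneg _), Real.sqrt_sq (hpi.1 x)]
        _ ≤ _ := Real.sqrt_le_sqrt h3
      calc Pj j / Real.sqrt C = ∑ x ∈ A j, pstar i x / Real.sqrt C := by
            rw [hPj, Finset.sum_div]
      _ ≤ ∑ x ∈ A j, Real.sqrt (pstar i x * nmlPmf (P j) x) := Finset.sum_le_sum hpt
      _ ≤ ∑ x, Real.sqrt (pstar i x * nmlPmf (P j) x) :=
            Finset.sum_le_sum_of_subset_of_nonneg (Finset.subset_univ _)
              (fun x _ _ => Real.sqrt_nonneg _)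
      _ = Bj j := rfl
    have hfib : ∑ x, pstar i x * (-Real.log (BC (pstar i) (nmlPmf (P (ih i x))))) =
        ∑ j, Pj j * (-Real.log (Bj j)) := by
      rw [← Finset.sum_fiberwise Finset.univ (fun x => ih i x)
        (fun x => pstar i x * (-Real.log (BC (pstar i) (nmlPmf (P (ih i x))))))]
      refine Finset.sum_congr rfl fun j _ => ?_
      rw [hPj]
      simp only
      rw [Finset.sum_mul]
      refine Finset.sum_congr rfl fun x hx => ?_
      have hxj : ih i x = j := (Finset.mem_filter.1 hx).2
      rw [hxj, hBj]
    rw [hfib]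
    have step1 : ∀ j, Pj j * (-Real.log (Bj j)) ≤
        Pj j * (-Real.log (Pj j)) + Pj j * ((1/2) * Real.log C) := by
      intro j
      rcases eq_or_lt_of_le (hPjnn j) with h | h
      · rw [← h]; simp
      · have hdiv : 0 < Pj j / Real.sqrt C := div_pos h hsC
        have hlogle : Real.log (Pj j / Real.sqrt C) ≤ Real.log (Bj j) :=
          Real.log_le_log hdiv (hBlb j)
        have hlog : Real.log (Pj j / Real.sqrt C) = Real.log (Pj j) - (1/2) * Real.log C := by
          rw [Real.log_div (ne_of_gt h) (ne_of_gt hsC), Real.log_sqrt (le_of_lt hC0)]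
          ring
        have h4 : -Real.log (Bj j) ≤ -Real.log (Pj j) + (1/2) * Real.log C := by
          rw [hlog] at hlogle; linarith
        calc Pj j * (-Real.log (Bj j)) ≤ Pj j * (-Real.log (Pj j) + (1/2) * Real.log C) :=
          mul_le_mul_of_nonneg_left h4 (le_of_lt h)
        _ = _ := by ring
    have hent : ∑ j, Pj j * (-Real.log (Pj j)) ≤ Real.log (Fintype.card ι) := by
      have hsum := Finset.sum_le_sum
        (fun j (_ : j ∈ (Finset.univ : Finset ι)) => neg_mul_log_le' (hPjnn j) hm1)
      calc ∑ j, Pj j * (-Real.log (Pj j))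
          ≤ ∑ _j : ι, (1 / (Fintype.card ι : ℝ)) +
            ∑ j, Pj j * (Real.log (Fintype.card ι) - 1) := by
            rw [← Finset.sum_add_distrib]; exact hsum
      _ = (Fintype.card ι : ℝ) * (1 / (Fintype.card ι : ℝ)) +
            (Real.log (Fintype.card ι) - 1) * ∑ j, Pj j := by
            rw [Finset.sum_const, Finset.card_univ, ← Finset.sum_mul]
            push_cast; ring
      _ = Real.log (Fintype.card ι) := by
            rw [hPsum]; field_simp; ring
    calc ∑ j, Pj j * (-Real.log (Bj j)) ≤
        ∑ j, (Pj j * (-Real.log (Pj j)) + Pj j * ((1/2) * Real.log C)) :=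
          Finset.sum_le_sum fun j _ => step1 j
      _ = (∑ j, Pj j * (-Real.log (Pj j))) + (1/2) * Real.log C := by
          rw [Finset.sum_add_distrib, ← Finset.sum_mul, hPsum]; ring
      _ ≤ Real.log (Fintype.card ι) + (1/2) * Real.log C := by linarith [hent]
      _ = (1/2) * Real.log C + Real.log (Fintype.card ι) := by ring
  have hrw : ∑ i, w i * ∑ x, pstar i x * (-(1 / n) * Real.log (BC (pstar i) (nmlPmf (P (ih i x))))) =
      (1/n) * ∑ i, w i * ∑ x, pstar i x * (-Real.log (BC (pstar i) (nmlPmf (P (ih i x))))) := by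
    rw [Finset.mul_sum]
    refine Finset.sum_congr rfl fun i _ => ?_
    rw [Finset.mul_sum, Finset.mul_sum, Finset.mul_sum]
    refine Finset.sum_congr rfl fun x _ => ?_
    ring
  rw [hrw]
  have hmain : ∑ i, w i * ∑ x, pstar i x * (-Real.log (BC (pstar i) (nmlPmf (P (ih i x))))) ≤
      ∑ i, w i * ((1/2) * Real.log (paramComplexity (P i))) + Real.log (Fintype.card ι) := by
    calc ∑ i, w i * ∑ x, pstar i x * (-Real.log (BC (pstar i) (nmlPmf (P (ih i x)))))
        ≤ ∑ i, w i * ((1/2) * Real.log (paramComplexity (P i)) + Real.log (Fintype.card ι)) :=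
          Finset.sum_le_sum fun i _ => mul_le_mul_of_nonneg_left (key i) (hw i)
      _ = ∑ i, w i * ((1/2) * Real.log (paramComplexity (P i))) +
            (∑ i, w i) * Real.log (Fintype.card ι) := by
          simp [mul_add, Finset.sum_add_distrib, Finset.sum_mul]
      _ = _ := by rw [hwsum]; ring
  have hdivrw : (∑ i, w i * ((1 / 2) * Real.log (paramComplexity (P i))) +
        Real.log (Fintype.card ι) + 1) / n =
      (1/n) * (∑ i, w i * ((1 / 2) * Real.log (paramComplexity (P i))) +
        Real.log (Fintype.card ι) + 1) := by ring
  rw [hdivrw]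
  have hn' : 0 < 1 / n := by positivity
  have : ∑ i, w i * ∑ x, pstar i x * (-Real.log (BC (pstar i) (nmlPmf (P (ih i x))))) ≤
      ∑ i, w i * ((1/2) * Real.log (paramComplexity (P i))) + Real.log (Fintype.card ι) + 1 := by
    linarith
  exact mul_le_mul_of_nonneg_left this (le_of_lt hn')
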